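/- Let γ : ℝ → E be a twice differentiable magnetic curve with charge q, i.e. γ''(t) = -q·φ(γ'(t)) for all t. Then for each i ∈ {1,…,n} the quantity (γ'_i(t))² + (γ'_{n+i}(t))² is constant in t. -/

import Mathlib

open scoped RealInnerProductSpace

/-- The structure tensor `φ` of the standard `C`-manifold structure on `ℝ^{2n+s}`:
`(φv)_i = v_{n+i}`, `(φv)_{n+i} = -v_i` for `0 ≤ i < n`, and `(φv)_{2n+α} = 0`. -/
noncomputable def phi (n s : ℕ) (v : EuclideanSpace ℝ (Fin (2*n+s))) :
    EuclideanSpace ℝ (Fin (2*n+s)) := WithLp.toLp 2 fun k =>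
  if _h1 : (k : ℕ) < n then v ⟨n + (k : ℕ), by omega⟩
  else if _h2 : (k : ℕ) < 2*n then -v ⟨(k : ℕ) - n, by omega⟩
  else 0

/-- The index `2n+α` of the characteristic direction `ξ_α = e_{2n+α}`. -/
def idxA (n s : ℕ) (α : Fin s) : Fin (2*n+s) := ⟨2*n + (α : ℕ), by omega⟩

/-- The index `i` for `1 ≤ i ≤ n` (0-based). -/
def idxI (n s : ℕ) (i : Fin n) : Fin (2*n+s) := ⟨(i : ℕ), by omega⟩

/-- The index `n+i` for `1 ≤ i ≤ n` (0-based). -/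
def idxNI (n s : ℕ) (i : Fin n) : Fin (2*n+s) := ⟨n + (i : ℕ), by omega⟩

/-- For a magnetic curve `γ'' = -q·φ(γ')` in the standard `C`-manifold `ℝ^{2n+s}`, the
quantity `(γ'_i)² + (γ'_{n+i})²` is constant in `t` for each `i ∈ {1,…,n}`. -/
theorem magnetic_curve_horizontal_speed_constant
    (n s : ℕ) (hn : 0 < n) (hs : 0 < s) (q : ℝ)
    (γ : ℝ → EuclideanSpace ℝ (Fin (2*n+s)))
    (hγ : Differentiable ℝ γ) (hγ' : Differentiable ℝ (deriv γ))
    (hmag : ∀ t : ℝ, deriv (deriv γ) t = (-q) • phi n s (deriv γ t)) :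
    ∀ i : Fin n, ∀ t₁ t₂ : ℝ,
      (deriv γ t₁ (idxI n s i)) ^ 2 + (deriv γ t₁ (idxNI n s i)) ^ 2 =
      (deriv γ t₂ (idxI n s i)) ^ 2 + (deriv γ t₂ (idxNI n s i)) ^ 2 := by

  intro i t₁ t₂
  set k1 := idxI n s i
  set k2 := idxNI n s i
  have hd : ∀ t : ℝ, HasDerivAt
      (fun t => (deriv γ t k1) ^ 2 + (deriv γ t k2) ^ 2) 0 t := by
    intro t
    have h1 : HasDerivAt (fun t => deriv γ t k1) (deriv (deriv γ) t k1) t :=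
      (EuclideanSpace.proj (𝕜 := ℝ) k1).hasFDerivAt.comp_hasDerivAt t
        (hγ' t).hasDerivAt
    have h2 : HasDerivAt (fun t => deriv γ t k2) (deriv (deriv γ) t k2) t :=
      (EuclideanSpace.proj (𝕜 := ℝ) k2).hasFDerivAt.comp_hasDerivAt t
        (hγ' t).hasDerivAt
    have e1 : deriv (deriv γ) t k1 = (-q) * deriv γ t k2 := by
      rw [hmag t]
      show (-q) * phi n s (deriv γ t) k1 = _
      have hk1 : ((k1 : Fin (2*n+s)) : ℕ) < n := i.2
      simp only [phi, hk1, dif_pos]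
      rfl
    have e2 : deriv (deriv γ) t k2 = q * deriv γ t k1 := by
      rw [hmag t]
      show (-q) * phi n s (deriv γ t) k2 = _
      have hk2 : ¬ ((k2 : Fin (2*n+s)) : ℕ) < n := by simp [k2, idxNI]
      have hk2' : ((k2 : Fin (2*n+s)) : ℕ) < 2*n := by
        have := i.2; simp [k2, idxNI]; omega
      simp only [phi, hk2, hk2', dif_pos, dif_neg, not_false_iff]
      have : (⟨(k2 : Fin (2*n+s)) - n, by omega⟩ : Fin (2*n+s)) = k1 := by
        apply Fin.ext
        simp [k2, idxNI, k1, idxI]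
      rw [this]; ring
    have := ((h1.pow 2).add (h2.pow 2))
    refine this.congr_deriv ?_
    rw [e1, e2]; ring
  have : ∀ t : ℝ, (fun t => (deriv γ t k1) ^ 2 + (deriv γ t k2) ^ 2) t =
      (fun t => (deriv γ t k1) ^ 2 + (deriv γ t k2) ^ 2) 0 := by
    intro t
    apply is_const_of_deriv_eq_zero (f := fun t => (deriv γ t k1) ^ 2 + (deriv γ t k2) ^ 2)
    · exact fun x => (hd x).differentiableAt
    · exact fun x => (hd x).deriv
  simpa using (this t₁).trans (this t₂).symm
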